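/- Define β(n) = μ(n)/τ(n) where μ(1)=1, μ(n) = min_{1 ≤ p ≤ n-1} n·μ(p)·μ(n-p), and τ(n) = 2^(2n-2)/n. Then β(2n) = β(n) for all n ≥ 1. -/

import Mathlib

/-- `μ(1) = 1` and `μ(n) = min_{1 ≤ p ≤ n-1} n·μ(p)·μ(n-p)` for `n ≥ 2`. -/
def mu : ℕ → ℕ
  | 0 => 1
  | 1 => 1
  | n + 2 =>
    (Finset.Icc 1 (n + 1)).attach.inf'
      (Finset.attach_nonempty_iff.mpr (Finset.nonempty_Icc.mpr (by omega)))
      (fun p => (n + 2) * mu p.1 * mu (n + 2 - p.1))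
decreasing_by
  · have := p.2; simp only [Finset.mem_Icc] at this; omega
  · have := p.2; simp only [Finset.mem_Icc] at this; omega

lemma mu_zero : mu 0 = 1 := by rw [mu]
lemma mu_one : mu 1 = 1 := by rw [mu]

lemma mu_le {n p : ℕ} (h1 : 1 ≤ p) (h2 : p ≤ n + 1) :
    mu (n + 2) ≤ (n + 2) * mu p * mu (n + 2 - p) := by
  rw [mu]
  exact Finset.inf'_le _ (Finset.mem_attach _ ⟨p, by simp only [Finset.mem_Icc]; omega⟩)

lemma mu_split (n : ℕ) :
    ∃ p, 1 ≤ p ∧ p ≤ n + 1 ∧ mu (n + 2) = (n + 2) * mu p * mu (n + 2 - p) := by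
  rw [mu]
  obtain ⟨a, -, ha⟩ := Finset.exists_mem_eq_inf'
    (Finset.attach_nonempty_iff.mpr (Finset.nonempty_Icc.mpr (by omega : (1:ℕ) ≤ n + 1)))
    (fun p : {x // x ∈ Finset.Icc 1 (n+1)} => (n + 2) * mu p.1 * mu (n + 2 - p.1))
  have hm := a.2
  simp only [Finset.mem_Icc] at hm
  exact ⟨a.1, hm.1, hm.2, ha⟩

lemma mu_le' {a b : ℕ} (ha : 1 ≤ a) (hb : 1 ≤ b) :
    mu (a + b) ≤ (a + b) * (mu a * mu b) := by
  obtain ⟨m, hm⟩ : ∃ m, a + b = m + 2 := ⟨a + b - 2, by omega⟩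
  have h := mu_le (n := m) (p := a) ha (by omega)
  rw [show m + 2 - a = b by omega] at h
  rw [hm]; linarith [h]

lemma mu_split' {n : ℕ} (h : 2 ≤ n) :
    ∃ a b, 1 ≤ a ∧ 1 ≤ b ∧ a + b = n ∧ mu n = n * (mu a * mu b) := by
  obtain ⟨m, hm⟩ : ∃ m, n = m + 2 := ⟨n - 2, by omega⟩
  subst hm
  obtain ⟨p, hp1, hp2, heq⟩ := mu_split m
  exact ⟨p, m + 2 - p, hp1, by omega, by omega, by rw [heq]; ring⟩

lemma mu_two : mu 2 = 2 := by
  obtain ⟨a, b, ha, hb, hab, heq⟩ := mu_split' (le_refl 2)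
  have h : a = 1 ∧ b = 1 := by omega
  rw [heq, h.1, h.2, mu_one]

/-- split bound valid even with a zero part -/
lemma mu_le'' {n x y : ℕ} (hn : 1 ≤ n) (h : x + y = n) : mu n ≤ n * (mu x * mu y) := by
  rcases Nat.eq_zero_or_pos x with rfl | hx
  · have : y = n := by omega
    subst this
    rw [mu_zero, one_mul]
    exact Nat.le_mul_of_pos_left _ hn
  rcases Nat.eq_zero_or_pos y with rfl | hy
  · have : x = n := by omega
    subst this
    rw [mu_zero, mul_one]
    exact Nat.le_mul_of_pos_left _ hn
  · exact h ▸ mu_le' hx hy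

lemma Qstep {n s t : ℕ} (hs : 1 ≤ s) (hst : s + t = n)
    (h : mu (2*n+1) = (2*n+1) * (mu (2*s) * mu (2*t+1)))
    (IHP : 2 * mu (2*s) = 2^(2*s) * mu s)
    (IHQ : 2^(4*t) * (mu t * mu (t+1)) ≤ mu (2*t+1)^2) :
    2^(4*n) * (mu n * mu (n+1)) ≤ mu (2*n+1)^2 := by
  have hn : 1 ≤ n := by omega
  have e1 : mu n ≤ n * (mu s * mu t) := mu_le'' hn hst
  have e2 : mu (n+1) ≤ (n+1) * (mu s * mu (t+1)) := by
    have := mu_le' hs (show 1 ≤ t + 1 by omega)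
    rwa [show s + (t+1) = n+1 by omega] at this
  have hpow : (2:ℕ)^(4*s) * 2^(4*t) = 2^(4*n) := by rw [← pow_add]; congr 1; omega
  have hs2 : 4 * mu (2*s)^2 = 2^(4*s) * mu s^2 := by
    calc 4 * mu (2*s)^2 = (2 * mu (2*s))^2 := by ring
      _ = (2^(2*s) * mu s)^2 := by rw [IHP]
      _ = (2^(2*s))^2 * mu s^2 := by ring
      _ = 2^(4*s) * mu s^2 := by rw [← pow_mul, show 2*s*2 = 4*s by ring]
  have h4 : 4 * (2^(4*n) * (mu n * mu (n+1))) ≤ 4 * mu (2*n+1)^2 := by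
    have big : 4*n*(n+1) ≤ (2*n+1)^2 := by nlinarith
    calc 4 * (2^(4*n) * (mu n * mu (n+1)))
        ≤ 4 * (2^(4*n) * ((n * (mu s * mu t)) * ((n+1) * (mu s * mu (t+1))))) :=
          mul_le_mul_right (mul_le_mul_right (Nat.mul_le_mul e1 e2) _) _
      _ = (4*n*(n+1)) * (2^(4*n) * (mu s^2 * (mu t * mu (t+1)))) := by ring
      _ ≤ (2*n+1)^2 * (2^(4*n) * (mu s^2 * (mu t * mu (t+1)))) := mul_le_mul_left big _
      _ = (2*n+1)^2 * ((2^(4*s) * mu s^2) * (2^(4*t) * (mu t * mu (t+1)))) := by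
          rw [← hpow]; ring
      _ ≤ (2*n+1)^2 * ((2^(4*s) * mu s^2) * mu (2*t+1)^2) :=
          mul_le_mul_right (mul_le_mul_right IHQ _) _
      _ = (2*n+1)^2 * ((4 * mu (2*s)^2) * mu (2*t+1)^2) := by rw [hs2]
      _ = 4 * mu (2*n+1)^2 := by rw [h]; ring
  exact Nat.le_of_mul_le_mul_left h4 (by norm_num)

theorem PQ (n : ℕ) :
    (1 ≤ n → 2 * mu (2*n) = 2^(2*n) * mu n) ∧
    2^(4*n) * (mu n * mu (n+1)) ≤ mu (2*n+1)^2 := by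
  induction n using Nat.strong_induction_on with
  | _ n ih =>
  rcases Nat.eq_zero_or_pos n with rfl | hn1
  · refine ⟨fun h => absurd h (by norm_num), ?_⟩
    simp [mu_zero, mu_one]
  · have hP : 2 * mu (2*n) = 2^(2*n) * mu n := by
      rcases eq_or_lt_of_le (show 1 ≤ n from hn1) with h1 | hn2
      · rw [← h1]
        norm_num [mu_two, mu_one]
      · apply le_antisymm
        · -- ≤
          obtain ⟨a, b, ha, hb, hab, heq⟩ := mu_split' hn2
          have hPa := (ih a (by omega)).1 ha
          have hPb := (ih b (by omega)).1 hb
          have hle : mu (2*n) ≤ (2*n) * (mu (2*a) * mu (2*b)) := by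
            have := mu_le' (a := 2*a) (b := 2*b) (by omega) (by omega)
            rwa [show 2*a + 2*b = 2*n by omega] at this
          have hpow : (2:ℕ)^(2*a) * 2^(2*b) = 2^(2*n) := by rw [← pow_add]; congr 1; omega
          have h4 : 4 * (2 * mu (2*n)) ≤ 4 * (2^(2*n) * mu n) := by
            calc 4 * (2 * mu (2*n)) ≤ 4 * (2 * ((2*n) * (mu (2*a) * mu (2*b)))) :=
                  mul_le_mul_right (mul_le_mul_right hle _) _
              _ = (4*n) * ((2 * mu (2*a)) * (2 * mu (2*b))) := by ring
              _ = (4*n) * ((2^(2*a) * mu a) * (2^(2*b) * mu b)) := by rw [hPa, hPb]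
              _ = 4 * (2^(2*n) * (n * (mu a * mu b))) := by rw [← hpow]; ring
              _ = 4 * (2^(2*n) * mu n) := by rw [← heq]
          exact Nat.le_of_mul_le_mul_left h4 (by norm_num)
        · -- ≥
          obtain ⟨a, b, ha, hb, hab, heq⟩ := mu_split' (show 2 ≤ 2*n by omega)
          rcases Nat.even_or_odd a with ⟨s, hs⟩ | ⟨q, hq⟩
          · -- even split
            have hs1 : 1 ≤ s := by omega
            have ht1 : 1 ≤ n - s := by omega
            have heq' : mu (2*n) = (2*n) * (mu (2*s) * mu (2*(n-s))) := by
              rw [heq, show a = 2*s by omega, show b = 2*(n-s) by omega]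
            have hPs := (ih s (by omega)).1 hs1
            have hPt := (ih (n-s) (by omega)).1 ht1
            have hmn : mu n ≤ n * (mu s * mu (n-s)) := by
              have := mu_le' hs1 ht1
              rwa [show s + (n-s) = n by omega] at this
            have hpow : (2:ℕ)^(2*s) * 2^(2*(n-s)) = 2^(2*n) := by
              rw [← pow_add]; congr 1; omega
            have h4 : 2 * (2^(2*n) * mu n) ≤ 2 * (2 * mu (2*n)) := by
              calc 2 * (2^(2*n) * mu n) ≤ 2 * (2^(2*n) * (n * (mu s * mu (n-s)))) :=
                    mul_le_mul_right (mul_le_mul_right hmn _) _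
                _ = (2*n) * ((2^(2*s) * mu s) * (2^(2*(n-s)) * mu (n-s))) := by rw [← hpow]; ring
                _ = (2*n) * ((2 * mu (2*s)) * (2 * mu (2*(n-s)))) := by rw [hPs, hPt]
                _ = 2 * (2 * ((2*n) * (mu (2*s) * mu (2*(n-s))))) := by ring
                _ = 2 * (2 * mu (2*n)) := by rw [← heq']
            exact Nat.le_of_mul_le_mul_left h4 (by norm_num)
          · -- odd split
            set r := n - q - 1 with hr
            have hrq : q + r + 1 = n := by omega
            have heq' : mu (2*n) = (2*n) * (mu (2*q+1) * mu (2*r+1)) := by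
              rw [heq, hq, show b = 2*r+1 by omega]
            have hQq := (ih q (by omega)).2
            have hQr := (ih r (by omega)).2
            have e1 : mu n ≤ n * (mu q * mu (r+1)) := mu_le'' hn1 (by omega)
            have e2 : mu n ≤ n * (mu (q+1) * mu r) := mu_le'' hn1 (by omega)
            have hpow : (2:ℕ)^(4*q) * 2^(4*r) * 16 = 2^(4*n) := by
              rw [show (16:ℕ) = 2^4 by norm_num, ← pow_add, ← pow_add]; congr 1; omega
            have key : (2^(2*n) * mu n)^2 ≤ (2 * mu (2*n))^2 := by
              calc (2^(2*n) * mu n)^2 = 2^(4*n) * (mu n * mu n) := by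
                    rw [show (4:ℕ)*n = 2*n + 2*n by ring, pow_add]; ring
                _ ≤ 2^(4*n) * ((n * (mu q * mu (r+1))) * (n * (mu (q+1) * mu r))) :=
                    mul_le_mul_right (Nat.mul_le_mul e1 e2) _
                _ = (16 * n^2) * ((2^(4*q) * (mu q * mu (q+1))) * (2^(4*r) * (mu r * mu (r+1)))) := by
                    rw [← hpow]; ring
                _ ≤ (16 * n^2) * (mu (2*q+1)^2 * mu (2*r+1)^2) :=
                    mul_le_mul_right (Nat.mul_le_mul hQq hQr) _
                _ = (2 * mu (2*n))^2 := by rw [heq']; ring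
            exact le_of_pow_le_pow_left₀ two_ne_zero (Nat.zero_le _) key
    refine ⟨fun _ => hP, ?_⟩
    -- Q part
    obtain ⟨a, b, ha, hb, hab, heq⟩ := mu_split' (show 2 ≤ 2*n+1 by omega)
    rcases Nat.even_or_odd a with ⟨s, hs⟩ | ⟨q, hq⟩
    · have hs1 : 1 ≤ s := by omega
      have heq' : mu (2*n+1) = (2*n+1) * (mu (2*s) * mu (2*(n-s)+1)) := by
        rw [heq, show a = 2*s by omega, show b = 2*(n-s)+1 by omega]
      have hPs : 2 * mu (2*s) = 2^(2*s) * mu s := by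
        rcases lt_or_eq_of_le (show s ≤ n by omega) with hlt | rfl
        · exact (ih s hlt).1 hs1
        · exact hP
      exact Qstep hs1 (by omega) heq' hPs ((ih (n-s) (by omega)).2)
    · have hs1 : 1 ≤ n - q := by omega
      have heq' : mu (2*n+1) = (2*n+1) * (mu (2*(n-q)) * mu (2*q+1)) := by
        rw [heq, hq, show b = 2*(n-q) by omega]; ring
      have hq' : q < n := by omega
      have hPs : 2 * mu (2*(n-q)) = 2^(2*(n-q)) * mu (n-q) := by
        rcases lt_or_eq_of_le (show n - q ≤ n by omega) with hlt | heqn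
        · exact (ih (n-q) hlt).1 hs1
        · rw [heqn]; exact hP
      exact Qstep hs1 (by omega) heq' hPs ((ih q hq').2)

/-- `β(n) = μ(n)/τ(n) = μ(n)·n/2^(2n-2)`. -/
def beta (n : ℕ) : ℚ := (mu n : ℚ) * n / 2 ^ (2 * n - 2)

/-- `β(2n) = β(n)` for all `n ≥ 1`. -/
theorem stmt_7 (n : ℕ) (hn : 1 ≤ n) : beta (2 * n) = beta n := by
  have key := (PQ n).1 hn
  have keyQ : (2:ℚ) * (mu (2*n) : ℚ) = 2^(2*n) * (mu n : ℚ) := by exact_mod_cast key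
  unfold beta
  have h4 : 2*(2*n) - 2 = (2*n) + (2*n - 2) := by omega
  rw [h4, pow_add]
  rw [div_eq_div_iff (by positivity) (by positivity)]
  push_cast
  linear_combination ((n : ℚ) * 2^(2*n-2)) * keyQ
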